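/- Nondecreasing utility under a renewal action (Corollary 3, part 1): Let Q_A be the X×X renewal transition matrix whose every row equals the first standard basis vector (i.e., (Q_A)_{x,1} = 1 and (Q_A)_{x,y} = 0 for y ≠ 1, for all x), let Q_a be an X×X row-stochastic real matrix, let p_A ∈ ℝ^X have all entries in (0,1] with p_A(1) > 0 and p_A(1) ≤ p_A(x) for every x ∈ {1,…,X}, let p_a ∈ ℝ^X have all entries in (0,1), and define π_a(β) := (I_X − βQ_a)(I_X − βQ_A)⁻¹(−log p_A) + log p_a for β ∈ [0,1). Then π_a is componentwise nondecreasing in β: for all 0 ≤ β₁ ≤ β₂ < 1 and every state x, π_a(β₁)(x) ≤ π_a(β₂)(x). -/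

import Mathlib

/-- Nondecreasing utility under a renewal action (Corollary 3, part 1). -/
theorem stmt_10 (X : ℕ) [NeZero X]
    (QA Qa : Matrix (Fin X) (Fin X) ℝ)
    (hQA : QA = Matrix.of fun _ y => if y = (0 : Fin X) then (1 : ℝ) else 0)
    (hQanonneg : ∀ i j, 0 ≤ Qa i j)
    (hQarow : ∀ i, ∑ j, Qa i j = 1)
    (pA pa : Fin X → ℝ)
    (hpA : ∀ x, 0 < pA x ∧ pA x ≤ 1)
    (hpA0 : 0 < pA 0)
    (hpAmin : ∀ x, pA 0 ≤ pA x)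
    (hpa : ∀ x, pa x ∈ Set.Ioo (0 : ℝ) 1) :
    let πa : ℝ → Fin X → ℝ := fun β =>
      (((1 : Matrix (Fin X) (Fin X) ℝ) - β • Qa) * (1 - β • QA)⁻¹).mulVec
          (fun x => -Real.log (pA x))
        + fun x => Real.log (pa x)
    ∀ β₁ β₂ : ℝ, 0 ≤ β₁ → β₁ ≤ β₂ → β₂ < 1 →
      ∀ x : Fin X, πa β₁ x ≤ πa β₂ x := by
  intro πa β₁ β₂ hb1 h12 hb2 x
  set v : Fin X → ℝ := fun x => -Real.log (pA x) with hv
  have hQAQA : QA * QA = QA := by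
    subst hQA
    ext i j
    simp [Matrix.mul_apply]
  have hQaQA : Qa * QA = QA := by
    subst hQA
    ext i j
    simp only [Matrix.mul_apply, Matrix.of_apply]
    by_cases h : j = 0 <;> simp [h, hQarow i]
  have hQAv : QA.mulVec v = fun _ => v 0 := by
    subst hQA
    ext i
    simp [Matrix.mulVec, dotProduct]
  -- key formula
  have key : ∀ β : ℝ, 0 ≤ β → β < 1 →
      πa β x = v x + β * (v 0 - ∑ j, Qa x j * v j) + Real.log (pa x) := by
    intro β h0 h1
    have h1β : (1 : ℝ) - β ≠ 0 := by linarith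
    set c : ℝ := β / (1 - β) with hc
    have hc1 : β + β * c = c := by rw [hc]; field_simp; ring
    have hc2 : c - β * c = β := by rw [hc]; field_simp
    have hinv : ((1 : Matrix (Fin X) (Fin X) ℝ) - β • QA) * (1 + c • QA) = 1 := by
      simp only [Matrix.sub_mul, Matrix.mul_add, Matrix.one_mul, Matrix.mul_one,
        Matrix.smul_mul, Matrix.mul_smul, hQAQA, smul_smul]
      match_scalars
      · ring
      · simp only [hc]; field_simp; ring
    have hinv' : ((1 : Matrix (Fin X) (Fin X) ℝ) - β • QA)⁻¹ = 1 + c • QA :=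
      Matrix.inv_eq_right_inv hinv
    have hprod : ((1 : Matrix (Fin X) (Fin X) ℝ) - β • Qa) * (1 - β • QA)⁻¹
        = 1 - β • Qa + β • QA := by
      rw [hinv']
      simp only [Matrix.sub_mul, Matrix.mul_add, Matrix.one_mul, Matrix.mul_one,
        Matrix.smul_mul, Matrix.mul_smul, hQaQA, smul_smul]
      match_scalars
      · ring
      · ring
      · simp only [hc]; field_simp
    show (((1 : Matrix (Fin X) (Fin X) ℝ) - β • Qa) * (1 - β • QA)⁻¹).mulVec v x
        + Real.log (pa x) = _
    rw [hprod]
    simp only [Matrix.add_mulVec, Matrix.sub_mulVec, Matrix.smul_mulVec,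
      Matrix.one_mulVec, hQAv]
    simp only [Pi.add_apply, Pi.sub_apply, Pi.smul_apply, smul_eq_mul]
    have : Qa.mulVec v x = ∑ j, Qa x j * v j := by
      simp [Matrix.mulVec, dotProduct]
    rw [this]
    ring
  have hslope : 0 ≤ v 0 - ∑ j, Qa x j * v j := by
    have h1 : ∑ j, Qa x j * v j ≤ ∑ j, Qa x j * v 0 := by
      apply Finset.sum_le_sum
      intro j _
      apply mul_le_mul_of_nonneg_left _ (hQanonneg x j)
      have := Real.log_le_log hpA0 (hpAmin j)
      simp only [hv]
      linarith
    have h2 : ∑ j, Qa x j * v 0 = v 0 := by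
      rw [← Finset.sum_mul, hQarow x, one_mul]
    linarith
  rw [key β₁ hb1 (lt_of_le_of_lt h12 hb2), key β₂ (le_trans hb1 h12) hb2]
  have := mul_le_mul_of_nonneg_right h12 hslope
  linarith
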